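/- Let F_p, F_q, F_l, S_e be real numbers with F_p > 0, and set F = F_l − (i/2)S_e ∈ ℂ. There exists λ ∈ ℝ such that the real quadratic form on ℝ⁴ ≅ ℂ² given by (q, p) ↦ (F_p/2)|p + Fq|² + λ(q₁p₂ − q₂p₁) + (F_q/2)|q|², where q = q₁ + iq₂, p = p₁ + ip₂, is positive definite if and only if F_p²S_e² + 4F_pF_q > 0. -/

import Mathlib

/-- Remark after Theorem 4.3: formal stability of the falling, spinning relative
equilibrium — there exists `λ` such that
`(q, p) ↦ (F_p/2)|p + Fq|² + λ(q₁p₂ − q₂p₁) + (F_q/2)|q|²` is positive definite —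
holds iff the spectral stability condition `F_p²S_e² + 4F_pF_q > 0` holds. -/
theorem stmt_9 (Fp Fq Fl Se : ℝ) (hFp : 0 < Fp) :
    letI F : ℂ := (Fl : ℂ) - (Complex.I / 2) * (Se : ℂ)
    (∃ lam : ℝ, ∀ q p : ℂ, ¬(q = 0 ∧ p = 0) →
        0 < Fp / 2 * ‖p + F * q‖^2 + lam * (q.re * p.im - q.im * p.re)
            + Fq / 2 * ‖q‖^2)
      ↔ 0 < Fp^2 * Se^2 + 4 * Fp * Fq := by
  have hnorm : ∀ z : ℂ, ‖z‖^2 = z.re^2 + z.im^2 := by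
    intro z
    rw [Complex.sq_norm, Complex.normSq_apply]
    ring
  have hFp' : Fp ≠ 0 := ne_of_gt hFp
  constructor
  · rintro ⟨lam, h⟩
    set F : ℂ := (Fl : ℂ) - (Complex.I / 2) * (Se : ℂ) with hF
    have h1 := h 1 (Complex.I * (-(lam / Fp) : ℝ) - F) (by simp)
    have e1 : (Complex.I * (-(lam / Fp) : ℝ) - F) + F * 1
        = Complex.I * (-(lam / Fp) : ℝ) := by ring
    rw [e1, hnorm, hnorm] at h1
    simp [hF, Complex.mul_re, Complex.mul_im, Complex.sub_re, Complex.sub_im,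
      Complex.div_re, Complex.div_im] at h1
    -- h1 : 0 < Fp / 2 * (lam * Fp / (Fp * Fp)) ^ 2
    --        + lam * (-(lam * Fp / (Fp * Fp)) + 2⁻¹ * Se) + Fq / 2
    have key : lam ^ 2 < Fp * Se * lam + Fp * Fq := by
      have h2 := mul_pos (by positivity : (0:ℝ) < 2 * Fp) h1
      have e : (2 * Fp) * (Fp / 2 * (lam * Fp / (Fp * Fp)) ^ 2
          + lam * (-(lam * Fp / (Fp * Fp)) + 2⁻¹ * Se) + Fq / 2)
          = -lam ^ 2 + Fp * Se * lam + Fp * Fq := by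
        field_simp
        ring
      rw [e] at h2
      linarith
    nlinarith [sq_nonneg (2 * lam - Fp * Se)]
  · intro hcond
    refine ⟨Fp * Se / 2, fun q p hqp => ?_⟩
    have hre : (p + ((Fl : ℂ) - (Complex.I / 2) * (Se : ℂ)) * q).re
        = p.re + Fl * q.re + Se / 2 * q.im := by
      simp [Complex.mul_re, Complex.sub_re, Complex.sub_im, Complex.div_re,
        Complex.div_im]
      ring
    have him : (p + ((Fl : ℂ) - (Complex.I / 2) * (Se : ℂ)) * q).im
        = p.im + Fl * q.im - Se / 2 * q.re := by
      simp [Complex.mul_im, Complex.sub_re, Complex.sub_im, Complex.div_re,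
        Complex.div_im]
      ring
    rw [hnorm, hnorm, hre, him]
    have hK : 0 < Fp * Se ^ 2 + 4 * Fq := by nlinarith
    by_cases hq : q = 0
    · have hp : p ≠ 0 := fun hp0 => hqp ⟨hq, hp0⟩
      have hcd : 0 < p.re ^ 2 + p.im ^ 2 := by
        have := Complex.normSq_pos.mpr hp
        rw [Complex.normSq_apply] at this
        nlinarith
      rw [hq]
      simp only [Complex.zero_re, Complex.zero_im]
      nlinarith
    · have hab : 0 < q.re ^ 2 + q.im ^ 2 := by
        have := Complex.normSq_pos.mpr hq
        rw [Complex.normSq_apply] at this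
        nlinarith
      nlinarith [mul_nonneg hFp.le (sq_nonneg (p.re + Fl * q.re)),
        mul_nonneg hFp.le (sq_nonneg (p.im + Fl * q.im)),
        mul_pos hK hab]
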